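/- There exists s₀ ∈ (0,1), depending only on the dimension n, such that for all s ∈ (0, s₀), all f ∈ L¹(Q₀), and all x ∈ Q₀, one has M_{Q₀}(M^#_{s,Q₀} f)(x) ≤ (2·8ⁿ/s) f^#_{Q₀}(x). -/

import Mathlib

open MeasureTheory ENNReal NNReal Set Filter

noncomputable section

/-- An axis-parallel cube in `ℝⁿ` (modeled as `Fin n → ℝ`), given by its lower-left
corner and (positive) side length. -/
structure Cube (n : ℕ) where
  corner : Fin n → ℝ
  side : ℝ
  side_pos : 0 < side

namespace Cube

/-- The underlying set of a cube. -/
def set {n : ℕ} (Q : Cube n) : Set (Fin n → ℝ) :=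
  Set.Icc Q.corner fun i => Q.corner i + Q.side

/-- The volume `|Q|` of a cube, as an extended nonnegative real. -/
def vol {n : ℕ} (Q : Cube n) : ℝ≥0∞ :=
  volume Q.set

end Cube

variable {n : ℕ}

/-- The mean value `f_Q = (1/|Q|) ∫_Q f`. -/
def cubeAvg (f : (Fin n → ℝ) → ℝ) (Q : Cube n) : ℝ :=
  (∫ x in Q.set, f x) / (volume Q.set).toReal

/-- `(1/|Q|) ∫_Q ∫_Q |f x - f y| dx dy`, as an extended nonnegative real. -/
def dblOsc (f : (Fin n → ℝ) → ℝ) (Q : Cube n) : ℝ≥0∞ :=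
  (∫⁻ x in Q.set, ∫⁻ y in Q.set, ENNReal.ofReal |f x - f y|) / Q.vol

/-- `(1/|Q|) ∫_Q |f - f_Q|`, as an extended nonnegative real. -/
def oscAvg (f : (Fin n → ℝ) → ℝ) (Q : Cube n) : ℝ≥0∞ :=
  (∫⁻ x in Q.set, ENNReal.ofReal |f x - cubeAvg f Q|) / Q.vol

/-- A packing of `Q₀`: a countable family of subcubes of `Q₀` with pairwise
disjoint interiors. -/
def IsPacking (Q₀ : Cube n) (π : Set (Cube n)) : Prop :=
  π.Countable ∧ (∀ Q ∈ π, Q.set ⊆ Q₀.set) ∧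
    π.Pairwise fun Q Q' => Disjoint (interior Q.set) (interior Q'.set)

/-- `γ ∈ Γ_f`: `γ` is integrable on `Q₀` and for every packing `{Qᵢ}` of `Q₀`,
`Σᵢ (1/|Qᵢ|) ∫_{Qᵢ}∫_{Qᵢ} |f x - f y| ≤ Σᵢ ∫_{Qᵢ} γ`. -/
def MemGamma (Q₀ : Cube n) (f γ : (Fin n → ℝ) → ℝ) : Prop :=
  IntegrableOn γ Q₀.set volume ∧
    ∀ π : Set (Cube n), IsPacking Q₀ π →
      ∑' Q : π, dblOsc f (Q : Cube n) ≤
        ∑' Q : π, ENNReal.ofReal (∫ x in (Q : Cube n).set, γ x)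

/-- The subcubes of `Q₀` containing the point `x`. -/
def subcubesAt (Q₀ : Cube n) (x : Fin n → ℝ) : Set (Cube n) :=
  {Q | Q.set ⊆ Q₀.set ∧ x ∈ Q.set}

/-- The sharp maximal function `f^#_{Q₀}(x) = sup_{Q₀ ⊇ Q ∋ x} (1/|Q|) ∫_Q |f - f_Q|`. -/
def sharpMax (Q₀ : Cube n) (f : (Fin n → ℝ) → ℝ) (x : Fin n → ℝ) : ℝ≥0∞ :=
  ⨆ Q ∈ subcubesAt Q₀ x, oscAvg f Q

/-- Hardy–Littlewood maximal function of an `ℝ≥0∞`-valued function. -/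
def hlMaxE (Q₀ : Cube n) (g : (Fin n → ℝ) → ℝ≥0∞) (x : Fin n → ℝ) : ℝ≥0∞ :=
  ⨆ Q ∈ subcubesAt Q₀ x, (∫⁻ y in Q.set, g y) / Q.vol

/-- Hardy–Littlewood maximal function `M_{Q₀} g (x) = sup_{Q₀ ⊇ Q ∋ x} (1/|Q|) ∫_Q |g|`. -/
def hlMax (Q₀ : Cube n) (g : (Fin n → ℝ) → ℝ) (x : Fin n → ℝ) : ℝ≥0∞ :=
  hlMaxE Q₀ (fun y => ENNReal.ofReal |g y|) x

/-- `inf_{c ∈ ℝ} inf {α ≥ 0 : |{y ∈ Q : |f y - c| > α}| < s |Q|}`. -/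
def oscS (s : ℝ) (f : (Fin n → ℝ) → ℝ) (Q : Cube n) : ℝ≥0∞ :=
  ⨅ c : ℝ,
    sInf {a : ℝ≥0∞ | volume {y ∈ Q.set | a < ENNReal.ofReal |f y - c|} < ENNReal.ofReal s * Q.vol}

/-- The Strömberg–Jawerth–Torchinsky local maximal function `M^#_{s,Q₀} f`. -/
def locSharpMax (s : ℝ) (Q₀ : Cube n) (f : (Fin n → ℝ) → ℝ) (x : Fin n → ℝ) : ℝ≥0∞ :=
  ⨆ Q ∈ subcubesAt Q₀ x, oscS s f Q

/-- The decreasing rearrangement (on `(0,1)`, extended-real-valued) of an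
`ℝ≥0∞`-valued function on `Q₀`. -/
def rearr (Q₀ : Cube n) (g : (Fin n → ℝ) → ℝ≥0∞) (t : ℝ) : ℝ≥0∞ :=
  sInf {a : ℝ≥0∞ | volume {x ∈ Q₀.set | a < g x} ≤ ENNReal.ofReal t}

/-- The decreasing rearrangement `f*` of a real function on `Q₀`. -/
def rearrF (Q₀ : Cube n) (f : (Fin n → ℝ) → ℝ) : ℝ → ℝ≥0∞ :=
  rearr Q₀ fun x => ENNReal.ofReal |f x|

/-- A rearrangement invariant (Banach function) space, described through its
representation space on `(0,1)`: an extended-real-valued function norm `N` on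
(`ℝ≥0∞`-valued) functions on `(0,1)` which is rearrangement invariant, has the
Fatou property, contains `L^∞(0,1)` and embeds into `L¹(0,1)`. -/
structure RISpace where
  N : (ℝ → ℝ≥0∞) → ℝ≥0∞
  add_le : ∀ f g : ℝ → ℝ≥0∞, Measurable f → Measurable g → N (f + g) ≤ N f + N g
  smul_eq : ∀ (c : ℝ≥0) (f : ℝ → ℝ≥0∞), N (fun t => (c : ℝ≥0∞) * f t) = (c : ℝ≥0∞) * N f
  mono : ∀ f g : ℝ → ℝ≥0∞, (∀ᵐ t ∂volume.restrict (Set.Ioo (0:ℝ) 1), f t ≤ g t) → N f ≤ N g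
  rearr_inv : ∀ f g : ℝ → ℝ≥0∞, Measurable f → Measurable g →
    (∀ a : ℝ≥0∞, volume {t ∈ Set.Ioo (0:ℝ) 1 | a < f t} = volume {t ∈ Set.Ioo (0:ℝ) 1 | a < g t}) →
    N f = N g
  eq_zero_iff : ∀ f : ℝ → ℝ≥0∞, Measurable f →
    (N f = 0 ↔ f =ᵐ[volume.restrict (Set.Ioo (0:ℝ) 1)] 0)
  fatou : ∀ f : ℕ → ℝ → ℝ≥0∞, (∀ k, Measurable (f k)) → Monotone f →
    N (fun t => ⨆ k, f k t) = ⨆ k, N (f k)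
  indicator_lt_top : N ((Set.Ioo (0:ℝ) 1).indicator fun _ => 1) < ⊤
  le_L1 : ∃ C : ℝ≥0∞, C ≠ ⊤ ∧ ∀ f : ℝ → ℝ≥0∞, Measurable f →
    (∫⁻ t in Set.Ioo (0:ℝ) 1, f t) ≤ C * N f

/-- The norm in `X` of an `ℝ≥0∞`-valued function on `Q₀`, computed through the
representation space: `‖g‖_X = ‖g*‖_{X̄}`. -/
def RISpace.normE (X : RISpace) (Q₀ : Cube n) (g : (Fin n → ℝ) → ℝ≥0∞) : ℝ≥0∞ :=
  X.N (rearr Q₀ g)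

/-- The norm `‖f‖_X = ‖f*‖_{X̄}` of a real function on `Q₀`. -/
def RISpace.normF (X : RISpace) (Q₀ : Cube n) (f : (Fin n → ℝ) → ℝ) : ℝ≥0∞ :=
  X.N (rearrF Q₀ f)

/-- The Garsia–Rodemich functional `‖f‖_{GaRo_X} = inf {‖γ‖_X : γ ∈ Γ_f}`. -/
def GaRoNorm (X : RISpace) (Q₀ : Cube n) (f : (Fin n → ℝ) → ℝ) : ℝ≥0∞ :=
  ⨅ γ ∈ {γ | MemGamma Q₀ f γ}, X.normF Q₀ γ

/-- `f ∈ GaRo_X`: `f ∈ L¹(Q₀)` and `Γ_f ∩ X ≠ ∅`. -/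
def MemGaRo (X : RISpace) (Q₀ : Cube n) (f : (Fin n → ℝ) → ℝ) : Prop :=
  IntegrableOn f Q₀.set volume ∧ ∃ γ, MemGamma Q₀ f γ ∧ X.normF Q₀ γ < ⊤

/-- `f ∈ X`. -/
def MemX (X : RISpace) (Q₀ : Cube n) (f : (Fin n → ℝ) → ℝ) : Prop :=
  IntegrableOn f Q₀.set volume ∧ X.normF Q₀ f < ⊤

/-- Decreasing rearrangement on `(0,1)` of an `ℝ≥0∞`-valued function on `(0,1)`. -/
def rearrI (g : ℝ → ℝ≥0∞) (t : ℝ) : ℝ≥0∞ :=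
  sInf {a : ℝ≥0∞ | volume {u ∈ Set.Ioo (0:ℝ) 1 | a < g u} ≤ ENNReal.ofReal t}

/-- The dilation operator `σ_s g (t) = g*(t/s)` for `0 < t < min s 1`, `0` otherwise. -/
def dil (s : ℝ) (g : ℝ → ℝ≥0∞) (t : ℝ) : ℝ≥0∞ :=
  if 0 < t ∧ t < min s 1 then rearrI g (t / s) else 0

/-- The operator norm `‖σ_s‖_{X̄ → X̄}`. -/
def RISpace.dilNorm (X : RISpace) (s : ℝ) : ℝ≥0∞ :=
  ⨆ g ∈ {g : ℝ → ℝ≥0∞ | Measurable g ∧ X.N g ≤ 1}, X.N (dil s g)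

/-- The lower Boyd index `α_X = lim_{s → 0+} log ‖σ_s‖ / log s`. -/
def RISpace.boydLower (X : RISpace) : ℝ :=
  limUnder (nhdsWithin (0:ℝ) (Set.Ioi 0)) fun s : ℝ =>
    Real.log (X.dilNorm s).toReal / Real.log s

/-- The upper Boyd index `β_X = lim_{s → ∞} log ‖σ_s‖ / log s`. -/
def RISpace.boydUpper (X : RISpace) : ℝ :=
  limUnder atTop fun s : ℝ => Real.log (X.dilNorm s).toReal / Real.log s

/-- The fundamental function `φ_X(s) = ‖χ_{(0,s)}‖_{X̄}`. -/
def RISpace.fund (X : RISpace) (s : ℝ) : ℝ≥0∞ :=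
  X.N ((Set.Ioo (0:ℝ) s).indicator fun _ => 1)

/-- `X` is of fundamental type: `‖σ_t‖ ≤ C sup_{s > 0, st ≤ 1} φ_X(st)/φ_X(s)`. -/
def RISpace.FundamentalType (X : RISpace) : Prop :=
  ∃ C : ℝ≥0∞, C ≠ ⊤ ∧ ∀ t : ℝ, 0 < t →
    X.dilNorm t ≤ C * ⨆ s ∈ {s : ℝ | 0 < s ∧ s * t ≤ 1}, X.fund (s * t) / X.fund s

/-- The `BMO(Q₀)` seminorm `sup_{Q ⊆ Q₀} (1/|Q|) ∫_Q |f - f_Q|`. -/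
def bmoNormE (Q₀ : Cube n) (f : (Fin n → ℝ) → ℝ) : ℝ≥0∞ :=
  ⨆ Q ∈ {Q : Cube n | Q.set ⊆ Q₀.set}, oscAvg f Q

/-- The `L¹(Q₀)` norm, extended-real-valued. -/
def L1normE (Q₀ : Cube n) (f : (Fin n → ℝ) → ℝ) : ℝ≥0∞ :=
  ∫⁻ x in Q₀.set, ENNReal.ofReal |f x|

/-- The Peetre K-functional for the couple `(L¹(Q₀), BMO(Q₀))` (modulo constants). -/
def KL1BMO (Q₀ : Cube n) (t : ℝ) (f : (Fin n → ℝ) → ℝ) : ℝ≥0∞ :=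
  ⨅ g : (Fin n → ℝ) → ℝ,
    (L1normE Q₀ fun x => f x - g x) + ENNReal.ofReal t * bmoNormE Q₀ g

/-- The unit cube `[0,1] ⊆ ℝ¹`, used to model the interval `(0,1)`. -/
def unitCube : Cube 1 := ⟨fun _ => 0, 1, one_pos⟩

/-- The John–Nirenberg functional
`‖f‖_{JN_p} = sup_π (Σᵢ |Qᵢ| ((1/|Qᵢ|) ∫_{Qᵢ} |f - f_{Qᵢ}|)^p)^{1/p}`. -/
def JNnorm (Q₀ : Cube n) (p : ℝ) (f : (Fin n → ℝ) → ℝ) : ℝ≥0∞ :=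
  ⨆ π ∈ {π : Set (Cube n) | IsPacking Q₀ π},
    (∑' Q : π, (Q : Cube n).vol * oscAvg f (Q : Cube n) ^ p) ^ (1 / p)

/-- `γ ∈ Γ'_f`: `γ ∈ L¹(Q₀)` and `f^#_{Q₀} ≤ M_{Q₀} γ` on `Q₀`. -/
def MemGammaP (Q₀ : Cube n) (f γ : (Fin n → ℝ) → ℝ) : Prop :=
  IntegrableOn γ Q₀.set volume ∧ ∀ x ∈ Q₀.set, sharpMax Q₀ f x ≤ hlMax Q₀ γ x

/-- `S_{π,#}(f) = Σ_{Q ∈ π} ((1/|Q|) ∫_Q |f - f_Q|) χ_Q`. -/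
def packFn (π : Set (Cube n)) (f : (Fin n → ℝ) → ℝ) (x : Fin n → ℝ) : ℝ≥0∞ :=
  ∑' Q : π, (Q : Cube n).set.indicator (fun _ => oscAvg f (Q : Cube n)) x

/-- `F_{f,#}(t) = sup_{π packing} (S_{π,#}(f))*(t)`. -/
def Fsharp (Q₀ : Cube n) (f : (Fin n → ℝ) → ℝ) (t : ℝ) : ℝ≥0∞ :=
  ⨆ π ∈ {π : Set (Cube n) | IsPacking Q₀ π}, rearr Q₀ (packFn π f) t

/-- The `GaRo_{∞,λ}` functional: the least constant `C` such that, for every packing,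
`Σᵢ (1/|Qᵢ|) ∫∫ |f x - f y| ≤ C Σᵢ |Qᵢ|^{1+λ/n}`. -/
def GaRoLamNorm (Q₀ : Cube n) (lam : ℝ) (f : (Fin n → ℝ) → ℝ) : ℝ≥0∞ :=
  sInf {C : ℝ≥0∞ | ∀ π : Set (Cube n), IsPacking Q₀ π →
    ∑' Q : π, dblOsc f (Q : Cube n) ≤ C * ∑' Q : π, (Q : Cube n).vol ^ (1 + lam / (n : ℝ))}

/-- The homogeneous Campanato seminorm
`‖f‖_{𝓛̇^{1,λ}} = sup_{Q ⊆ Q₀} |Q|^{-λ/n} (1/|Q|) ∫_Q |f - f_Q|`. -/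
def campNorm (Q₀ : Cube n) (lam : ℝ) (f : (Fin n → ℝ) → ℝ) : ℝ≥0∞ :=
  ⨆ Q ∈ {Q : Cube n | Q.set ⊆ Q₀.set}, Q.vol ^ (-(lam / (n : ℝ))) * oscAvg f Q

/-- The Gagliardo (fractional Sobolev) seminorm `‖f‖_{W^{α,p}}` on `Q₀`. -/
def sobNorm (Q₀ : Cube n) (a p : ℝ) (f : (Fin n → ℝ) → ℝ) : ℝ≥0∞ :=
  (∫⁻ x in Q₀.set, ∫⁻ y in Q₀.set,
      ENNReal.ofReal
        (|f x - f y| ^ p / Real.sqrt (∑ i, (x i - y i) ^ 2) ^ ((n : ℝ) + a * p))) ^ (1 / p)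


namespace GRhelp

lemma cube_mem_iff {Q : Cube n} {y : Fin n → ℝ} :
    y ∈ Q.set ↔ ∀ i, Q.corner i ≤ y i ∧ y i ≤ Q.corner i + Q.side := by
  simp [Cube.set, Set.mem_Icc, Pi.le_def, forall_and]

lemma cube_nonempty (Q : Cube n) : Q.set.Nonempty :=
  ⟨Q.corner, cube_mem_iff.2 fun i => ⟨le_rfl, by linarith [Q.side_pos]⟩⟩

lemma cube_meas (Q : Cube n) : MeasurableSet Q.set := measurableSet_Icc

lemma cube_vol_eq (Q : Cube n) : Q.vol = ENNReal.ofReal Q.side ^ n := by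
  simp [Cube.vol, Cube.set, Real.volume_Icc_pi, add_sub_cancel_left]

lemma cube_vol_ne_zero (Q : Cube n) : Q.vol ≠ 0 := by
  rw [cube_vol_eq]
  exact pow_ne_zero _ (ENNReal.ofReal_pos.2 Q.side_pos).ne'

lemma cube_vol_ne_top (Q : Cube n) : Q.vol ≠ ⊤ := by
  rw [cube_vol_eq]
  exact (pow_ne_top ENNReal.ofReal_ne_top)

lemma cube_subset_coords {A B : Cube n} (h : A.set ⊆ B.set) (i : Fin n) :
    B.corner i ≤ A.corner i ∧ A.corner i + A.side ≤ B.corner i + B.side := by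
  have h1 := h (cube_nonempty A).choose_spec
  have h2 : (fun i => A.corner i + A.side) ∈ B.set := by
    apply h
    exact cube_mem_iff.2 fun i => ⟨by linarith [A.side_pos], le_rfl⟩
  have h3 : A.corner ∈ B.set := h (cube_mem_iff.2 fun i => ⟨le_rfl, by linarith [A.side_pos]⟩)
  exact ⟨(cube_mem_iff.1 h3 i).1, (cube_mem_iff.1 h2 i).2⟩

lemma cube_subset_of_coords {A B : Cube n}
    (h : ∀ i, B.corner i ≤ A.corner i ∧ A.corner i + A.side ≤ B.corner i + B.side) :
    A.set ⊆ B.set := by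
  intro y hy
  rw [cube_mem_iff] at hy ⊢
  intro i
  exact ⟨(h i).1.trans (hy i).1, (hy i).2.trans (h i).2⟩

lemma icc_eq_closedBall (c : Fin n → ℝ) {ρ : ℝ} (hρ : 0 ≤ ρ) :
    Set.Icc (fun i => c i - ρ) (fun i => c i + ρ) = Metric.closedBall c ρ := by
  rw [closedBall_pi _ hρ]
  ext y
  simp [Set.mem_pi, Real.closedBall_eq_Icc, Set.mem_Icc]

lemma cube_set_eq_closedBall (Q : Cube n) :
    Q.set = Metric.closedBall (fun i => Q.corner i + Q.side / 2) (Q.side / 2) := by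
  rw [← icc_eq_closedBall _ (by linarith [Q.side_pos] : (0:ℝ) ≤ Q.side / 2)]
  unfold Cube.set
  have h1 : Q.corner = fun i => Q.corner i + Q.side / 2 - Q.side / 2 := by funext i; ring
  have h2 : (fun i => Q.corner i + Q.side) = fun i => Q.corner i + Q.side / 2 + Q.side / 2 := by
    funext i; ring
  rw [← h1, ← h2]

lemma volume_closedBall (c : Fin n → ℝ) {ρ : ℝ} (hρ : 0 ≤ ρ) :
    volume (Metric.closedBall c ρ) = ENNReal.ofReal (2 * ρ) ^ n := by
  rw [← icc_eq_closedBall _ hρ, Real.volume_Icc_pi]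
  simp only [add_sub_sub_cancel]
  rw [Finset.prod_const, Finset.card_univ, Fintype.card_fin, two_mul]

lemma exists_cube (Q₀ : Cube n) (u v : Fin n → ℝ) (L : ℝ) (hL : 0 < L) (hL0 : L ≤ Q₀.side)
    (hu : ∀ i, Q₀.corner i ≤ u i) (hv : ∀ i, v i ≤ Q₀.corner i + Q₀.side)
    (hspan : ∀ i, v i - u i ≤ L) :
    ∃ C : Cube n, C.side = L ∧ (∀ i, C.corner i ≤ u i ∧ v i ≤ C.corner i + L) ∧
      C.set ⊆ Q₀.set := by
  refine ⟨⟨fun i => min (u i) (Q₀.corner i + Q₀.side - L), L, hL⟩, rfl, fun i => ⟨min_le_left _ _, ?_⟩, ?_⟩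
  · rcases min_cases (u i) (Q₀.corner i + Q₀.side - L) with ⟨h, _⟩ | ⟨h, _⟩ <;>
      · simp only [h]; first | linarith [hspan i] | linarith [hv i]
  · apply cube_subset_of_coords
    intro i
    constructor
    · exact le_min (hu i) (by linarith)
    · simp only
      have := min_le_right (u i) (Q₀.corner i + Q₀.side - L)
      linarith



lemma layercake_le {α : Type*} [MeasurableSpace α] (μ : Measure α) {g : α → ℝ≥0∞}
    (hg : Measurable g) :
    ∫⁻ a, g a ∂μ ≤ ∫⁻ t in Set.Ioi (0:ℝ), μ {a | ENNReal.ofReal t < g a} := by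
  have key : ∀ k : ℕ, ∫⁻ a, min (g a) k ∂μ ≤ ∫⁻ t in Set.Ioi (0:ℝ), μ {a | ENNReal.ofReal t < g a} := by
    intro k
    have hmble : Measurable fun a => min (g a) (k : ℝ≥0∞) := hg.min measurable_const
    have hne : ∀ a, min (g a) (k : ℝ≥0∞) ≠ ⊤ :=
      fun a => ne_top_of_le_ne_top (natCast_ne_top k) (min_le_right _ _)
    have h1 : ∀ a, min (g a) (k : ℝ≥0∞) = ENNReal.ofReal ((min (g a) (k:ℝ≥0∞)).toReal) :=
      fun a => (ENNReal.ofReal_toReal (hne a)).symm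
    calc ∫⁻ a, min (g a) k ∂μ
        = ∫⁻ a, ENNReal.ofReal ((min (g a) (k:ℝ≥0∞)).toReal) ∂μ := lintegral_congr h1
      _ = ∫⁻ t in Set.Ioi (0:ℝ), μ {a | t < (min (g a) (k:ℝ≥0∞)).toReal} :=
          lintegral_eq_lintegral_meas_lt μ (Filter.Eventually.of_forall fun a => ENNReal.toReal_nonneg)
            hmble.ennreal_toReal.aemeasurable
      _ ≤ ∫⁻ t in Set.Ioi (0:ℝ), μ {a | ENNReal.ofReal t < g a} := by
          apply lintegral_mono_ae
          filter_upwards [ae_restrict_mem measurableSet_Ioi] with t ht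
          apply measure_mono
          intro a ha
          have : ENNReal.ofReal t < min (g a) (k:ℝ≥0∞) :=
            (ENNReal.ofReal_lt_iff_lt_toReal (le_of_lt ht) (hne a)).2 ha
          exact lt_of_lt_of_le this (min_le_left _ _)
  have hgeq : ∀ a, g a = ⨆ k : ℕ, min (g a) (k : ℝ≥0∞) := by
    intro a
    apply le_antisymm
    · rcases eq_or_ne (g a) ⊤ with h | h
      · have hmin : ∀ k : ℕ, min (g a) (k:ℝ≥0∞) = k := fun k => min_eq_right (h ▸ le_top)
        simp only [hmin]
        rw [ENNReal.iSup_natCast]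
        exact le_top
      · obtain ⟨k, hk⟩ := ENNReal.exists_nat_gt h
        exact le_trans (le_of_eq (min_eq_left hk.le).symm) (le_iSup (fun j : ℕ => min (g a) (j:ℝ≥0∞)) k)
    · exact iSup_le fun k => min_le_left _ _
  calc ∫⁻ a, g a ∂μ = ∫⁻ a, ⨆ k : ℕ, min (g a) (k:ℝ≥0∞) ∂μ := lintegral_congr hgeq
    _ = ⨆ k : ℕ, ∫⁻ a, min (g a) (k:ℝ≥0∞) ∂μ :=
        lintegral_iSup (fun k => hg.min measurable_const)
          (fun i j hij a => min_le_min le_rfl (Nat.cast_le.2 hij))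
    _ ≤ _ := iSup_le key

lemma exists_rat_cube (hn : 0 < n) (R : Cube n) :
    ∃ R' : Cube n, (∀ i, ∃ q : ℚ, R'.corner i = (q:ℝ)) ∧ (∃ q : ℚ, R'.side = (q:ℝ)) ∧
      R.set ⊆ R'.set ∧ R'.vol ≤ 2 * R.vol ∧ R'.side ≤ 2 * R.side := by
  have hc0 : (0:ℝ) < (2:ℝ) ^ ((n:ℝ)⁻¹) := Real.rpow_pos_of_pos (by norm_num) _
  have hc1 : (1:ℝ) < (2:ℝ) ^ ((n:ℝ)⁻¹) := by
    rw [show (1:ℝ) = (1:ℝ) ^ ((n:ℝ)⁻¹) from (Real.one_rpow _).symm]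
    apply Real.rpow_lt_rpow (by norm_num) (by norm_num)
    positivity
  have hcn : ((2:ℝ) ^ ((n:ℝ)⁻¹)) ^ n = 2 := by
    rw [← Real.rpow_natCast ((2:ℝ) ^ ((n:ℝ)⁻¹)) n, ← Real.rpow_mul (by norm_num),
      inv_mul_cancel₀ (Nat.cast_ne_zero.2 hn.ne'), Real.rpow_one]
  have hc2 : (2:ℝ) ^ ((n:ℝ)⁻¹) ≤ 2 := by
    calc (2:ℝ) ^ ((n:ℝ)⁻¹) ≤ (2:ℝ) ^ (1:ℝ) := by
          apply Real.rpow_le_rpow_of_exponent_le (by norm_num)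
          rw [inv_le_one_iff₀]
          right
          exact_mod_cast hn
      _ = 2 := Real.rpow_one 2
  obtain ⟨q, hq1, hq2⟩ := exists_rat_btwn
    (show R.side < (2:ℝ)^((n:ℝ)⁻¹) * R.side by nlinarith [R.side_pos])
  choose p hp1 hp2 using fun i => exists_rat_btwn
    (show R.corner i + R.side - (q:ℝ) < R.corner i by linarith)
  have hq0 : (0:ℝ) < q := lt_trans R.side_pos hq1
  refine ⟨⟨fun i => (p i : ℝ), (q:ℝ), hq0⟩, fun i => ⟨p i, rfl⟩, ⟨q, rfl⟩, ?_, ?_, ?_⟩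
  · apply cube_subset_of_coords
    intro i
    exact ⟨(hp2 i).le, by have := hp1 i; simp only; linarith⟩
  · rw [cube_vol_eq, cube_vol_eq]
    simp only
    rw [← ENNReal.ofReal_pow hq0.le, ← ENNReal.ofReal_pow R.side_pos.le]
    have hle : ((q:ℝ))^n ≤ 2 * R.side ^ n := by
      calc ((q:ℝ))^n ≤ ((2:ℝ)^((n:ℝ)⁻¹) * R.side)^n := by
            apply pow_le_pow_left₀ hq0.le hq2.le
        _ = 2 * R.side ^ n := by rw [mul_pow, hcn]
    calc ENNReal.ofReal ((q:ℝ)^n) ≤ ENNReal.ofReal (2 * R.side^n) := ENNReal.ofReal_le_ofReal hle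
      _ = 2 * ENNReal.ofReal (R.side^n) := by
          rw [ENNReal.ofReal_mul (by norm_num)]
          norm_num
  · simp only
    nlinarith [R.side_pos]

lemma numeric_ineq (hn : 1 ≤ n) : (7:ℝ)^n + 2*(9/2:ℝ)^n ≤ 2*8^n := by
  induction n, hn using Nat.le_induction with
  | base => norm_num
  | succ m hm ih =>
    have h1 : (0:ℝ) ≤ 7^m := by positivity
    have h2 : (0:ℝ) ≤ (9/2:ℝ)^m := by positivity
    calc (7:ℝ)^(m+1) + 2*(9/2)^(m+1) = 7*(7:ℝ)^m + (9/2)*(2*(9/2)^m) := by ring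
      _ ≤ 8*((7:ℝ)^m + 2*(9/2)^m) := by nlinarith
      _ ≤ 8*(2*8^m) := by nlinarith
      _ = 2*8^(m+1) := by ring

end GRhelp

open GRhelp

lemma oscS_le_cheb {n : ℕ} {s : ℝ} (hs : 0 < s) {f : (Fin n → ℝ) → ℝ} (R : Cube n) (c : ℝ)
    (hfae : AEMeasurable f (volume.restrict R.set)) :
    oscS s f R ≤ (∫⁻ y in R.set, ENNReal.ofReal |f y - c|) / (ENNReal.ofReal s * R.vol) := by
  set I := ∫⁻ y in R.set, ENNReal.ofReal |f y - c| with hIdef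
  set β := I / (ENNReal.ofReal s * R.vol) with hβdef
  refine le_trans (iInf_le _ c) ?_
  by_contra hcon
  push_neg at hcon
  obtain ⟨t, hβt, hts⟩ := exists_between hcon
  have hden0 : ENNReal.ofReal s * R.vol ≠ 0 :=
    (ENNReal.mul_pos (ENNReal.ofReal_pos.2 hs).ne' (cube_vol_ne_zero R)).ne'
  have hdent : ENNReal.ofReal s * R.vol ≠ ⊤ :=
    ENNReal.mul_ne_top ENNReal.ofReal_ne_top (cube_vol_ne_top R)
  have ht0 : t ≠ 0 := (lt_of_le_of_lt (zero_le : 0 ≤ β) hβt).ne'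
  have htmem : t ∈ {a : ℝ≥0∞ |
      volume {y ∈ R.set | a < ENNReal.ofReal |f y - c|} < ENNReal.ofReal s * R.vol} := by
    rcases eq_or_ne t ⊤ with rfl | htop
    · have hempty : {y ∈ R.set | (⊤:ℝ≥0∞) < ENNReal.ofReal |f y - c|} = ∅ := by
        ext y; simp [not_top_lt]
      rw [Set.mem_setOf_eq, hempty, measure_empty]
      exact lt_of_le_of_ne zero_le (Ne.symm hden0)
    · rw [Set.mem_setOf_eq]
      have hmeas : AEMeasurable (fun y => ENNReal.ofReal |f y - c|) (volume.restrict R.set) := by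
        have h0 := (AEMeasurable.sub hfae (aemeasurable_const : AEMeasurable (fun _ => c) (volume.restrict R.set))).norm
        simp only [Real.norm_eq_abs] at h0
        exact h0.ennreal_ofReal
      calc volume {y ∈ R.set | t < ENNReal.ofReal |f y - c|}
          ≤ (volume.restrict R.set) {y | t ≤ ENNReal.ofReal |f y - c|} := by
            rw [Measure.restrict_apply' (cube_meas R)]
            apply measure_mono
            intro y hy
            exact ⟨le_of_lt hy.2, hy.1⟩
        _ ≤ I / t := meas_ge_le_lintegral_div hmeas ht0 htop
        _ < ENNReal.ofReal s * R.vol := by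
            rw [ENNReal.div_lt_iff (Or.inl ht0) (Or.inl htop)]
            have h1 := (ENNReal.div_lt_iff (Or.inl hden0) (Or.inl hdent)).1 hβt
            rwa [mul_comm] at h1
  exact absurd (sInf_le htmem) (not_le.2 hts)

/-- There is `s₀ ∈ (0,1)` depending only on `n` such that for all
`s ∈ (0,s₀)`, `f ∈ L¹(Q₀)` and `x ∈ Q₀`:
`M_{Q₀}(M^#_{s,Q₀} f)(x) ≤ (2·8ⁿ/s) f^#_{Q₀}(x)`. -/
theorem garsia_rodemich_stmt3 (n : ℕ) :
    ∃ s₀ ∈ Set.Ioo (0:ℝ) 1, ∀ Q₀ : Cube n, volume Q₀.set = 1 →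
      ∀ s ∈ Set.Ioo (0:ℝ) s₀, ∀ f : (Fin n → ℝ) → ℝ, IntegrableOn f Q₀.set volume →
        ∀ x ∈ Q₀.set,
          hlMaxE Q₀ (locSharpMax s Q₀ f) x ≤
            (2 * 8 ^ n / ENNReal.ofReal s) * sharpMax Q₀ f x := by
  refine ⟨1/2, by norm_num, ?_⟩
  intro Q₀ _hQ₀vol s hs f hf x hx
  rcases Nat.eq_zero_or_pos n with hn0 | hn
  · -- dimension 0 : everything degenerates
    subst hn0
    have hosc : ∀ Q : Cube 0, oscS s f Q = 0 := by
      intro Q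
      apply le_antisymm _ zero_le
      unfold oscS
      refine le_trans (iInf_le _ (f Q.corner)) ?_
      apply sInf_le
      have hempty : {y ∈ Q.set | (0:ℝ≥0∞) < ENNReal.ofReal |f y - f Q.corner|} = ∅ := by
        ext y
        simp only [Set.mem_setOf_eq, Set.mem_empty_iff_false, iff_false, not_and]
        intro _
        have hy : y = Q.corner := Subsingleton.elim _ _
        simp [hy]
      rw [Set.mem_setOf_eq, hempty, measure_empty]
      exact lt_of_le_of_ne zero_le
        (Ne.symm (ENNReal.mul_pos (ENNReal.ofReal_pos.2 hs.1).ne' (cube_vol_ne_zero Q)).ne')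
    have hloc : ∀ y, locSharpMax s Q₀ f y = 0 := by
      intro y
      apply le_antisymm _ zero_le
      unfold locSharpMax
      apply iSup₂_le
      intro Q _
      rw [hosc Q]
    have hzero : hlMaxE Q₀ (locSharpMax s Q₀ f) x = 0 := by
      apply le_antisymm _ zero_le
      unfold hlMaxE
      apply iSup₂_le
      intro Q _
      simp [hloc]
    rw [hzero]
    exact zero_le
  -- main case : n ≥ 1
  have hn1 : 1 ≤ n := hn
  set S := ENNReal.ofReal s with hSdef
  have hS0 : S ≠ 0 := (ENNReal.ofReal_pos.2 hs.1).ne'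
  have hStop : S ≠ ⊤ := ENNReal.ofReal_ne_top
  set shp := sharpMax Q₀ f x with hshpdef
  set B1 := ENNReal.ofReal 7 ^ n with hB1def
  set c27 := ENNReal.ofReal (27/8) with hc27def
  unfold hlMaxE
  apply iSup₂_le
  intro Q hQ
  obtain ⟨hQsub, hxQ⟩ := hQ
  set ℓ := Q.side with hℓdef
  have hℓpos : 0 < ℓ := Q.side_pos
  -- construct the enlarged cube Q*
  obtain ⟨Qs, hQs_side, hQs_cont, hQs_sub⟩ := exists_cube Q₀
      (fun i => max (Q₀.corner i) (Q.corner i - ℓ/6))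
      (fun i => min (Q₀.corner i + Q₀.side) (Q.corner i + ℓ + ℓ/6))
      (min ((4/3)*ℓ) Q₀.side)
      (lt_min (by linarith) Q₀.side_pos) (min_le_right _ _)
      (fun i => le_max_left _ _) (fun i => min_le_left _ _)
      (fun i => by
        refine le_min ?_ ?_
        · have h1 := min_le_right (Q₀.corner i + Q₀.side) (Q.corner i + ℓ + ℓ/6)
          have h2 := le_max_right (Q₀.corner i) (Q.corner i - ℓ/6)
          linarith
        · have h1 := min_le_left (Q₀.corner i + Q₀.side) (Q.corner i + ℓ + ℓ/6)
          have h2 := le_max_left (Q₀.corner i) (Q.corner i - ℓ/6)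
          linarith)
  have hQQs : Q.set ⊆ Qs.set := by
    apply cube_subset_of_coords
    intro i
    obtain ⟨h1, h2⟩ := hQs_cont i
    have hc := cube_subset_coords hQsub i
    constructor
    · exact le_trans h1 (max_le hc.1 (by linarith))
    · rw [hQs_side]
      exact le_trans (le_min hc.2 (by linarith)) h2
  have hxQs : x ∈ Qs.set := hQQs hxQ
  have hQsmem : Qs ∈ subcubesAt Q₀ x := ⟨hQs_sub, hxQs⟩
  have hQs_vol : Qs.vol ≤ ENNReal.ofReal (4/3) ^ n * Q.vol := by
    rw [cube_vol_eq, cube_vol_eq, hQs_side, ← mul_pow]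
    apply pow_le_pow_left' ?_ n
    rw [← ENNReal.ofReal_mul (by norm_num)]
    exact ENNReal.ofReal_le_ofReal (min_le_left _ _)
  -- measurable representative of f
  have hfQ₀ : AEMeasurable f (volume.restrict Q₀.set) := hf.aemeasurable
  set f' := hfQ₀.mk f with hf'def
  have hf'meas : Measurable f' := hfQ₀.measurable_mk
  have hff' : f =ᵐ[volume.restrict Q₀.set] f' := hfQ₀.ae_eq_mk
  have hnull : volume ({z | f z ≠ f' z} ∩ Q₀.set) = 0 := by
    have h1 := hff'
    rw [EventuallyEq, ae_iff, Measure.restrict_apply' (cube_meas Q₀)] at h1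
    exact h1
  set c₀ := cubeAvg f Qs with hc₀def
  set E := fun t : ℝ≥0∞ => {z ∈ Qs.set | t < ENNReal.ofReal |f z - c₀|} with hEdef
  set E' := fun t : ℝ≥0∞ => {z ∈ Qs.set | t < ENNReal.ofReal |f' z - c₀|} with hE'def
  have hE'meas : ∀ t, MeasurableSet (E' t) := by
    intro t
    have : E' t = Qs.set ∩ {z | t < ENNReal.ofReal |f' z - c₀|} := rfl
    rw [this]
    exact (cube_meas Qs).inter
      (measurableSet_lt measurable_const ((hf'meas.sub measurable_const).abs.ennreal_ofReal))
  have hEE' : ∀ (t : ℝ≥0∞) (A : Set (Fin n → ℝ)), volume (A ∩ E t) = volume (A ∩ E' t) := by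
    intro t A
    apply measure_congr
    rw [MeasureTheory.ae_eq_set]
    constructor
    · apply measure_mono_null _ hnull
      rintro z ⟨⟨hzA, hzQs, hlt⟩, hnot⟩
      refine ⟨?_, hQs_sub hzQs⟩
      intro heq
      exact hnot ⟨hzA, hzQs, by rwa [← heq]⟩
    · apply measure_mono_null _ hnull
      rintro z ⟨⟨hzA, hzQs, hlt⟩, hnot⟩
      refine ⟨?_, hQs_sub hzQs⟩
      intro heq
      exact hnot ⟨hzA, hzQs, by rwa [heq]⟩
  -- the countable family of rational cubes
  set D := {R' : Cube n | (∀ i, ∃ q:ℚ, R'.corner i = (q:ℝ)) ∧ (∃ q:ℚ, R'.side = (q:ℝ)) ∧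
      R'.side ≤ 2*Q₀.side} with hDdef
  have hD : D.Countable := by
    have hinj : Function.Injective (fun R' : Cube n => (R'.corner, R'.side)) := by
      rintro ⟨c1, s1, h1⟩ ⟨c2, s2, h2⟩ h
      simp only [Prod.mk.injEq] at h
      simp [h.1, h.2]
    have h1 : {c : Fin n → ℝ | ∀ i, ∃ q:ℚ, c i = (q:ℝ)}.Countable := by
      have heq : {c : Fin n → ℝ | ∀ i, ∃ q:ℚ, c i = (q:ℝ)}
          = Set.pi Set.univ (fun _ => Set.range ((↑) : ℚ → ℝ)) := by
        ext c
        simp [Set.mem_pi, eq_comm]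
      rw [heq]
      exact Set.countable_univ_pi (fun i => Set.countable_range _)
    have h2 : {x : ℝ | ∃ q:ℚ, x = (q:ℝ)}.Countable := by
      have : {x : ℝ | ∃ q:ℚ, x = (q:ℝ)} = Set.range ((↑) : ℚ → ℝ) := by
        ext x; simp [eq_comm]
      rw [this]
      exact Set.countable_range _
    have hS : ({p : (Fin n → ℝ) × ℝ | (∀ i, ∃ q:ℚ, p.1 i = (q:ℝ)) ∧ ∃ q:ℚ, p.2 = (q:ℝ)}).Countable := by
      have heq : {p : (Fin n → ℝ) × ℝ | (∀ i, ∃ q:ℚ, p.1 i = (q:ℝ)) ∧ ∃ q:ℚ, p.2 = (q:ℝ)}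
          = {c : Fin n → ℝ | ∀ i, ∃ q:ℚ, c i = (q:ℝ)} ×ˢ {x : ℝ | ∃ q:ℚ, x = (q:ℝ)} := by
        ext ⟨a, b⟩
        simp [Set.mem_prod]
      rw [heq]
      exact h1.prod h2
    apply Set.Countable.mono (s₂ := (fun R' : Cube n => (R'.corner, R'.side)) ⁻¹' {p : (Fin n → ℝ) × ℝ | (∀ i, ∃ q:ℚ, p.1 i = (q:ℝ)) ∧ ∃ q:ℚ, p.2 = (q:ℝ)}) _ (hS.preimage hinj)
    intro R' hR'
    exact ⟨hR'.1, hR'.2.1⟩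
  set κ := fun R' : Cube n => sInf {t : ℝ≥0∞ | 2 * volume (R'.set ∩ E t) < S * R'.vol} with hκdef
  haveI : Countable ↥D := hD.to_subtype
  set G := fun y => ⨆ R' : D, (R' : Cube n).set.indicator (fun _ => κ R') y with hGdef
  have hGmeas : Measurable G :=
    Measurable.iSup fun R' => Measurable.indicator measurable_const (cube_meas _)
  -- pointwise bound on Q
  have hpoint : ∀ y ∈ Q.set, locSharpMax s Q₀ f y ≤ B1 * shp / S + G y := by
    intro y hy
    unfold locSharpMax
    apply iSup₂_le
    intro R hR
    obtain ⟨hRsub, hyR⟩ := hR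
    have hyRc := cube_mem_iff.1 hyR
    have hyQc := cube_mem_iff.1 hy
    rcases le_or_gt ℓ (6 * R.side) with hbig | hsmall
    · -- large cubes
      obtain ⟨Rs, hRs_side, hRs_cont, hRs_sub⟩ := exists_cube Q₀
        (fun i => min (R.corner i) (Q.corner i))
        (fun i => max (R.corner i + R.side) (Q.corner i + ℓ))
        (min (R.side + ℓ) Q₀.side)
        (lt_min (by linarith [R.side_pos]) Q₀.side_pos) (min_le_right _ _)
        (fun i => le_min (cube_subset_coords hRsub i).1 (cube_subset_coords hQsub i).1)
        (fun i => max_le (cube_subset_coords hRsub i).2 (cube_subset_coords hQsub i).2)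
        (fun i => by
          refine le_min ?_ ?_
          · have h3 := hyRc i
            have h4 := hyQc i
            have hmin1 : R.corner i - ℓ ≤ min (R.corner i) (Q.corner i) :=
              le_min (by linarith) (by linarith)
            have hmin2 : Q.corner i - R.side ≤ min (R.corner i) (Q.corner i) :=
              le_min (by linarith) (by linarith)
            have hmax1 : max (R.corner i + R.side) (Q.corner i + ℓ)
                ≤ min (R.corner i) (Q.corner i) + (R.side + ℓ) :=
              max_le (by linarith) (by linarith)
            linarith
          · have h5 := cube_subset_coords hRsub i
            have h6 := cube_subset_coords hQsub i
            have h7 : max (R.corner i + R.side) (Q.corner i + ℓ) ≤ Q₀.corner i + Q₀.side :=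
              max_le h5.2 h6.2
            have h8 : Q₀.corner i ≤ min (R.corner i) (Q.corner i) := le_min h5.1 h6.1
            linarith)
      have hRRs : R.set ⊆ Rs.set := by
        apply cube_subset_of_coords
        intro i
        obtain ⟨h1, h2⟩ := hRs_cont i
        rw [hRs_side]
        exact ⟨le_trans h1 (min_le_left _ _), le_trans (le_max_left _ _) h2⟩
      have hQRs : Q.set ⊆ Rs.set := by
        apply cube_subset_of_coords
        intro i
        obtain ⟨h1, h2⟩ := hRs_cont i
        rw [hRs_side]
        exact ⟨le_trans h1 (min_le_right _ _), le_trans (le_max_right _ _) h2⟩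
      have hxRs : x ∈ Rs.set := hQRs hxQ
      have hRsvol : Rs.vol ≤ B1 * R.vol := by
        rw [cube_vol_eq, cube_vol_eq, hRs_side, hB1def, ← mul_pow]
        apply pow_le_pow_left' ?_ n
        rw [← ENNReal.ofReal_mul (by norm_num)]
        apply ENNReal.ofReal_le_ofReal
        calc min (R.side + ℓ) Q₀.side ≤ R.side + ℓ := min_le_left _ _
          _ ≤ 7 * R.side := by linarith
      calc oscS s f R
          ≤ (∫⁻ z in R.set, ENNReal.ofReal |f z - cubeAvg f Rs|) / (S * R.vol) :=
            oscS_le_cheb hs.1 R (cubeAvg f Rs) (hf.mono_set hRsub).aemeasurable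
        _ ≤ (B1 * shp * R.vol) / (S * R.vol) := by
            apply ENNReal.div_le_div_right
            calc ∫⁻ z in R.set, ENNReal.ofReal |f z - cubeAvg f Rs|
                ≤ ∫⁻ z in Rs.set, ENNReal.ofReal |f z - cubeAvg f Rs| :=
                  lintegral_mono' (Measure.restrict_mono hRRs le_rfl) le_rfl
              _ = oscAvg f Rs * Rs.vol := by
                  unfold oscAvg
                  exact (ENNReal.div_mul_cancel (cube_vol_ne_zero Rs) (cube_vol_ne_top Rs)).symm
              _ ≤ shp * (B1 * R.vol) := by
                  apply mul_le_mul' _ hRsvol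
                  rw [hshpdef]
                  unfold sharpMax
                  exact le_biSup _ ⟨hRs_sub, hxRs⟩
              _ = B1 * shp * R.vol := by ring
        _ = B1 * shp / S := ENNReal.mul_div_mul_right _ _ (cube_vol_ne_zero R) (cube_vol_ne_top R)
        _ ≤ B1 * shp / S + G y := le_self_add
    · -- small cubes
      obtain ⟨R', hR'c, hR's, hRR', hR'vol, hR'side⟩ := exists_rat_cube hn R
      have hℓℓ₀ : ℓ ≤ Q₀.side := by
        have hfin : (0:ℕ) < n := hn
        have hcoords := cube_subset_coords hQsub ⟨0, hfin⟩
        linarith [hcoords.1, hcoords.2]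
      have hR'D : R' ∈ D := ⟨hR'c, hR's, by linarith [R.side_pos]⟩
      have hRQs : R.set ⊆ Qs.set := by
        apply cube_subset_of_coords
        intro i
        have h3 := hyRc i
        have h4 := hyQc i
        have h5 := cube_subset_coords hRsub i
        obtain ⟨hc1, hc2⟩ := hQs_cont i
        constructor
        · exact le_trans hc1 (max_le h5.1 (by linarith))
        · rw [hQs_side]
          exact le_trans (le_min h5.2 (by linarith)) hc2
      have hosc : oscS s f R ≤ κ R' := by
        unfold oscS
        refine le_trans (iInf_le _ c₀) ?_
        apply le_sInf
        intro t ht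
        apply sInf_le
        rw [Set.mem_setOf_eq]
        have hsub : {z ∈ R.set | t < ENNReal.ofReal |f z - c₀|} ⊆ R'.set ∩ E t := by
          rintro z ⟨hz1, hz2⟩
          exact ⟨hRR' hz1, hRQs hz1, hz2⟩
        have h2 : 2 * volume {z ∈ R.set | t < ENNReal.ofReal |f z - c₀|} < 2 * (S * R.vol) := by
          calc 2 * volume {z ∈ R.set | t < ENNReal.ofReal |f z - c₀|}
              ≤ 2 * volume (R'.set ∩ E t) := mul_le_mul_right (measure_mono hsub) 2
            _ < S * R'.vol := ht
            _ ≤ S * (2 * R.vol) := by gcongr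
            _ = 2 * (S * R.vol) := by ring
        exact (ENNReal.mul_lt_mul_iff_right two_ne_zero ENNReal.ofNat_ne_top).1 h2
      calc oscS s f R ≤ κ R' := hosc
        _ ≤ G y := by
            have hyR' : y ∈ R'.set := hRR' hyR
            have hle := le_iSup (fun R'' : D => (R'' : Cube n).set.indicator (fun _ => κ R'') y)
              (⟨R', hR'D⟩ : D)
            rw [hGdef]
            simpa [Set.indicator_of_mem hyR'] using hle
        _ ≤ B1 * shp / S + G y := le_add_self
  -- level set estimate (Vitali)
  have hGlevel : ∀ t₀ : ℝ≥0∞, S * volume {y | t₀ < G y} ≤ 2 * c27^n * volume (E' t₀) := by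
    intro t₀
    set F := {R' : Cube n | R' ∈ D ∧ t₀ < κ R'} with hFdef
    have hcover : {y | t₀ < G y} ⊆ ⋃ R' ∈ F, (R' : Cube n).set := by
      intro y hy
      rw [Set.mem_setOf_eq, hGdef] at hy
      obtain ⟨⟨R', hR'D⟩, hR'⟩ := lt_iSup_iff.1 hy
      by_cases hyR' : y ∈ R'.set
      · rw [Set.indicator_of_mem hyR'] at hR'
        exact Set.mem_biUnion ⟨hR'D, hR'⟩ hyR'
      · rw [Set.indicator_of_notMem hyR'] at hR'
        exact absurd hR' (not_lt.2 zero_le)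
    obtain ⟨u, huF, hdisj, hcov⟩ :=
      Vitali.exists_disjoint_subfamily_covering_enlargement_closedBall F
        (fun R' : Cube n => fun i => R'.corner i + R'.side/2) (fun R' => R'.side/2) Q₀.side
        (fun R' hR' => by
          have := hR'.1.2.2
          linarith [Q₀.side_pos])
        (27/8) (by norm_num)
    have huD : u.Countable := Set.Countable.mono (fun R' hR' => (huF hR').1) hD
    haveI : Countable ↥u := huD.to_subtype
    have hFprop : ∀ R' ∈ F, S * R'.vol ≤ 2 * volume (R'.set ∩ E' t₀) := by
      intro R' hR'
      have h2 : S * R'.vol ≤ 2 * volume (R'.set ∩ E t₀) := by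
        by_contra hlt
        push_neg at hlt
        have hmem : t₀ ∈ {t : ℝ≥0∞ | 2 * volume (R'.set ∩ E t) < S * R'.vol} := hlt
        exact absurd (sInf_le hmem) (not_le.2 hR'.2)
      rwa [hEE' t₀ R'.set] at h2
    have hdisj' : u.PairwiseDisjoint (fun b : Cube n => b.set ∩ E' t₀) := by
      apply Set.PairwiseDisjoint.mono hdisj
      exact fun b => le_trans Set.inter_subset_left (le_of_eq (cube_set_eq_closedBall b))
    calc S * volume {y | t₀ < G y}
        ≤ S * volume (⋃ R' ∈ F, (R' : Cube n).set) :=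
          mul_le_mul_right (measure_mono hcover) S
      _ ≤ S * volume (⋃ b ∈ u,
            Metric.closedBall (fun i => b.corner i + b.side/2) ((27/8) * (b.side/2))) := by
          apply mul_le_mul_right
          apply measure_mono
          apply Set.iUnion₂_subset
          intro R' hR'
          obtain ⟨b, hb, hsub⟩ := hcov R' hR'
          rw [cube_set_eq_closedBall R']
          exact hsub.trans (Set.subset_biUnion_of_mem (u := fun b : Cube n => Metric.closedBall (fun i => b.corner i + b.side/2) ((27/8)*(b.side/2))) hb)
      _ ≤ S * ∑' b : u, volume (Metric.closedBall
            (fun i => (b:Cube n).corner i + (b:Cube n).side/2) ((27/8) * ((b:Cube n).side/2))) :=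
          mul_le_mul_right (measure_biUnion_le _ huD _) S
      _ = S * ∑' b : u, c27^n * (b:Cube n).vol := by
          congr 1
          apply tsum_congr
          intro b
          rw [volume_closedBall _ (mul_nonneg (by norm_num) (by linarith [b.1.side_pos] : (0:ℝ) ≤ (b:Cube n).side/2)),
            cube_vol_eq, hc27def, ← mul_pow, ← ENNReal.ofReal_mul (by norm_num)]
          congr 2
          ring
      _ = c27^n * ∑' b : u, S * (b:Cube n).vol := by
          rw [ENNReal.tsum_mul_left, ENNReal.tsum_mul_left]
          ring
      _ ≤ c27^n * ∑' b : u, 2 * volume ((b:Cube n).set ∩ E' t₀) :=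
          mul_le_mul_right (ENNReal.tsum_le_tsum fun b : ↥u => hFprop b.1 (huF b.2)) _
      _ = c27^n * (2 * ∑' b : u, volume ((b:Cube n).set ∩ E' t₀)) := by
          rw [ENNReal.tsum_mul_left]
      _ ≤ c27^n * (2 * volume (E' t₀)) := by
          gcongr
          rw [← measure_biUnion huD hdisj' (fun b _ => (cube_meas b).inter (hE'meas t₀))]
          apply measure_mono
          apply Set.iUnion₂_subset
          intro b _
          exact Set.inter_subset_right
      _ = 2 * c27^n * volume (E' t₀) := by ring
  -- integral of G over Q
  have hGint : ∫⁻ y in Q.set, G y ≤ (2 * c27^n / S) * (shp * Qs.vol) := by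
    have hconst_ne_top : 2 * c27^n / S ≠ ⊤ := by
      apply (ENNReal.div_lt_top _ hS0).ne
      exact ENNReal.mul_ne_top ENNReal.ofNat_ne_top (pow_ne_top ENNReal.ofReal_ne_top)
    calc ∫⁻ y in Q.set, G y
        ≤ ∫⁻ t in Set.Ioi (0:ℝ), (volume.restrict Q.set) {a | ENNReal.ofReal t < G a} :=
          layercake_le _ hGmeas
      _ ≤ ∫⁻ t in Set.Ioi (0:ℝ), (2 * c27^n / S) * volume (E' (ENNReal.ofReal t)) := by
          apply lintegral_mono
          intro t
          have h1 : (volume.restrict Q.set) {a | ENNReal.ofReal t < G a}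
              ≤ volume {a | ENNReal.ofReal t < G a} := Measure.restrict_apply_le _ _
          have h2 := hGlevel (ENNReal.ofReal t)
          have h3 : volume {a | ENNReal.ofReal t < G a}
              ≤ 2 * c27^n * volume (E' (ENNReal.ofReal t)) / S := by
            rw [ENNReal.le_div_iff_mul_le (Or.inl hS0) (Or.inl hStop), mul_comm]
            exact h2
          refine le_trans h1 (le_trans h3 (le_of_eq ?_))
          rw [div_eq_mul_inv, div_eq_mul_inv]
          ring
      _ = (2 * c27^n / S) * ∫⁻ t in Set.Ioi (0:ℝ), volume (E' (ENNReal.ofReal t)) :=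
          lintegral_const_mul' _ _ hconst_ne_top
      _ ≤ (2 * c27^n / S) * (shp * Qs.vol) := by
          gcongr
          calc ∫⁻ t in Set.Ioi (0:ℝ), volume (E' (ENNReal.ofReal t))
              = ∫⁻ t in Set.Ioi (0:ℝ), (volume.restrict Qs.set) {z | t < |f' z - c₀|} := by
                apply setLIntegral_congr_fun measurableSet_Ioi
                intro t ht
                beta_reduce
                rw [Measure.restrict_apply' (cube_meas Qs)]
                congr 1
                ext z
                simp only [hE'def, Set.mem_setOf_eq, Set.mem_inter_iff]
                constructor
                · rintro ⟨hz1, hz2⟩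
                  exact ⟨(ENNReal.ofReal_lt_ofReal_iff_of_nonneg (le_of_lt ht)).1 hz2, hz1⟩
                · rintro ⟨hz1, hz2⟩
                  exact ⟨hz2, (ENNReal.ofReal_lt_ofReal_iff_of_nonneg (le_of_lt ht)).2 hz1⟩
            _ = ∫⁻ z in Qs.set, ENNReal.ofReal |f' z - c₀| :=
                (lintegral_eq_lintegral_meas_lt _ (Filter.Eventually.of_forall fun z => abs_nonneg _)
                  ((hf'meas.sub measurable_const).abs.aemeasurable)).symm
            _ = ∫⁻ z in Qs.set, ENNReal.ofReal |f z - c₀| := by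
                apply lintegral_congr_ae
                have hae : f =ᵐ[volume.restrict Qs.set] f' :=
                  ae_restrict_of_ae_restrict_of_subset hQs_sub hff'
                filter_upwards [hae] with z hz
                rw [hz]
            _ = oscAvg f Qs * Qs.vol := by
                unfold oscAvg
                rw [hc₀def]
                exact (ENNReal.div_mul_cancel (cube_vol_ne_zero Qs) (cube_vol_ne_top Qs)).symm
            _ ≤ shp * Qs.vol := by
                apply mul_le_mul' _ le_rfl
                rw [hshpdef]
                unfold sharpMax
                exact le_biSup _ hQsmem
  -- put everything together
  have hnum : B1 + 2 * (ENNReal.ofReal (9/2))^n ≤ 2 * 8^n := by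
    have hr := numeric_ineq hn1
    calc B1 + 2 * (ENNReal.ofReal (9/2))^n
        = ENNReal.ofReal ((7:ℝ)^n + 2*(9/2:ℝ)^n) := by
          rw [hB1def, ← ENNReal.ofReal_pow (by norm_num : (0:ℝ) ≤ 7) n,
            ← ENNReal.ofReal_pow (by norm_num : (0:ℝ) ≤ 9/2) n,
            ENNReal.ofReal_add (by positivity) (by positivity),
            ENNReal.ofReal_mul (by norm_num)]
          norm_num
      _ ≤ ENNReal.ofReal (2*(8:ℝ)^n) := ENNReal.ofReal_le_ofReal hr
      _ = 2 * 8^n := by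
          rw [ENNReal.ofReal_mul (by norm_num), ENNReal.ofReal_pow (by norm_num)]
          norm_num
  have hc49 : c27^n * (ENNReal.ofReal (4/3))^n = (ENNReal.ofReal (9/2))^n := by
    rw [hc27def, ← mul_pow, ← ENNReal.ofReal_mul (by norm_num)]
    norm_num
  rw [ENNReal.div_le_iff (cube_vol_ne_zero Q) (cube_vol_ne_top Q)]
  calc ∫⁻ y in Q.set, locSharpMax s Q₀ f y
      ≤ ∫⁻ y in Q.set, (B1 * shp / S + G y) := by
        apply lintegral_mono_ae
        filter_upwards [ae_restrict_mem (cube_meas Q)] with y hy using hpoint y hy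
    _ = (B1 * shp / S) * Q.vol + ∫⁻ y in Q.set, G y := by
        rw [lintegral_add_left measurable_const, setLIntegral_const]
        rfl
    _ ≤ (B1 * shp / S) * Q.vol + (2 * c27^n / S) * (shp * Qs.vol) :=
        add_le_add_right hGint _
    _ ≤ (B1 * shp / S) * Q.vol + (2 * c27^n / S) * (shp * ((ENNReal.ofReal (4/3))^n * Q.vol)) := by
        gcongr
    _ = (B1 + 2 * (ENNReal.ofReal (9/2))^n) * (S⁻¹ * (shp * Q.vol)) := by
        rw [← hc49]
        simp only [div_eq_mul_inv]
        ring
    _ ≤ (2 * 8^n) * (S⁻¹ * (shp * Q.vol)) := by gcongr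
    _ = 2 * 8^n / S * shp * Q.vol := by
        rw [div_eq_mul_inv]
        ring

end
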